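/- Let G be a group, K, H ≤ G subgroups, and let I ⊆ G be a set of representatives for the double cosets K\G/H. Then there is an isomorphism of left ℤ[G]-modules ℤ[G/K] ⊗_ℤ ℤ[G/H] ≅ ⊕_{g ∈ I} ℤ[G/(K ∩ gHg⁻¹)], where G acts diagonally on the tensor product. -/

import Mathlib

open scoped TensorProduct DirectSum

/-- Left translation action of `a : G` on the permutation module `ℤ[G/L]`. -/
noncomputable def permAct {G : Type} [Group G] (L : Subgroup G) (a : G) :
    ((G ⧸ L) →₀ ℤ) →ₗ[ℤ] ((G ⧸ L) →₀ ℤ) :=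
  Finsupp.lmapDomain ℤ ℤ (fun x : G ⧸ L => a • x)

/-- The conjugate subgroup `gHg⁻¹`. -/
def conjSub {G : Type} [Group G] (g : G) (H : Subgroup G) : Subgroup G :=
  Subgroup.map (MulAut.conj g).toMonoidHom H

section Aux

variable {G : Type} [Group G] (K H : Subgroup G)

lemma mem_conjSub {g x : G} : x ∈ conjSub g H ↔ ∃ h ∈ H, g * h * g⁻¹ = x := by
  simp [conjSub, Subgroup.mem_map]

/-- From a point of `G ⧸ (K ⊓ gHg⁻¹)` to a pair of cosets. -/
def psi (g : G) : G ⧸ (K ⊓ conjSub g H) → (G ⧸ K) × (G ⧸ H) :=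
  fun x => Quotient.liftOn' x (fun z : G => ((z : G ⧸ K), ((z * g : G) : G ⧸ H)))
    (by
      intro z z' hzz'
      rw [QuotientGroup.leftRel_apply, Subgroup.mem_inf] at hzz'
      obtain ⟨hK, hHg⟩ := hzz'
      rw [mem_conjSub] at hHg
      obtain ⟨h, hh, hEq⟩ := hHg
      refine Prod.ext ?_ ?_
      · exact (QuotientGroup.eq).mpr hK
      · refine (QuotientGroup.eq).mpr ?_
        have : (z * g)⁻¹ * (z' * g) = g⁻¹ * (z⁻¹ * z') * g := by group
        rw [this, ← hEq]
        have h2 : g⁻¹ * (g * h * g⁻¹) * g = h := by group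
        rw [h2]; exact hh)

lemma psi_mk (g z : G) : psi K H g (↑z) = ((z : G ⧸ K), ((z * g : G) : G ⧸ H)) := rfl

lemma psi_smul (g a : G) (x : G ⧸ (K ⊓ conjSub g H)) :
    psi K H g (a • x) = ((a • (psi K H g x).1), (a • (psi K H g x).2)) := by
  induction x using QuotientGroup.induction_on with
  | H z =>
    show psi K H g (↑(a * z)) = _
    rw [psi_mk, psi_mk]
    refine Prod.ext rfl ?_
    show ((a * z * g : G) : G ⧸ H) = ((a * (z * g) : G) : G ⧸ H)
    rw [mul_assoc]

variable (I : Set G)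

/-- The combined map from the disjoint union of the `G ⧸ (K ⊓ gHg⁻¹)`. -/
def Psi : (Σ g : I, G ⧸ (K ⊓ conjSub (g : G) H)) → (G ⧸ K) × (G ⧸ H) :=
  fun p => psi K H (p.1 : G) p.2

lemma Psi_bij
    (hI : ∀ x : G, ∃! g : I, x ∈ DoubleCoset.doubleCoset (g : G) (K : Set G) (H : Set G)) :
    Function.Bijective (Psi K H I) := by
  constructor
  · rintro ⟨g, x⟩ ⟨g', x'⟩ hEq
    induction x using QuotientGroup.induction_on with
    | H z =>
    induction x' using QuotientGroup.induction_on with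
    | H z' =>
    simp only [Psi, psi_mk, Prod.ext_iff] at hEq
    obtain ⟨h1, h2⟩ := hEq
    rw [QuotientGroup.eq] at h1 h2
    have hgg' : g = g' := by
      have hmem : (g' : G) ∈ DoubleCoset.doubleCoset (g : G) (K : Set G) (H : Set G) := by
        rw [DoubleCoset.mem_doubleCoset]
        refine ⟨z'⁻¹ * z, ?_, (z * g)⁻¹ * (z' * g'), h2, by group⟩
        have := K.inv_mem h1
        simpa using this
      have hmem' : (g' : G) ∈ DoubleCoset.doubleCoset (g' : G) (K : Set G) (H : Set G) := by
        rw [DoubleCoset.mem_doubleCoset]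
        exact ⟨1, K.one_mem, 1, H.one_mem, by group⟩
      obtain ⟨u, _, hu⟩ := hI (g' : G)
      exact (hu g hmem).trans (hu g' hmem').symm
    subst hgg'
    refine Sigma.ext rfl ?_
    simp only [heq_eq_eq]
    rw [QuotientGroup.eq, Subgroup.mem_inf]
    refine ⟨h1, ?_⟩
    rw [mem_conjSub]
    refine ⟨(z * g)⁻¹ * (z' * g), h2, by group⟩
  · rintro ⟨x, y⟩
    induction x using QuotientGroup.induction_on with
    | H zx =>
    induction y using QuotientGroup.induction_on with
    | H zy =>
    obtain ⟨g, hg, _⟩ := hI (zx⁻¹ * zy)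
    rw [DoubleCoset.mem_doubleCoset] at hg
    obtain ⟨k, hk, h, hh, hEq⟩ := hg
    refine ⟨⟨g, ((zx * k : G) : _)⟩, ?_⟩
    simp only [Psi, psi_mk, Prod.ext_iff]
    constructor
    · rw [QuotientGroup.eq]; simpa using hk
    · rw [QuotientGroup.eq]
      have h3 : (zx * k * (g : G))⁻¹ * zy = h := by
        rw [show (zx * k * (g : G))⁻¹ * zy = ((g : G))⁻¹ * k⁻¹ * (zx⁻¹ * zy) by group, hEq]
        group
      rw [h3]; exact hh

end Aux

/-- Double coset formula: if `I` is a set of representatives for the double cosets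
`K\G/H`, then `ℤ[G/K] ⊗ ℤ[G/H] ≅ ⊕_{g ∈ I} ℤ[G/(K ∩ gHg⁻¹)]` as `ℤ[G]`-modules,
where `G` acts diagonally on the tensor product. -/
theorem stmt_4 {G : Type} [Group G] (K H : Subgroup G) (I : Set G)
    (hI : ∀ x : G, ∃! g : I, x ∈ DoubleCoset.doubleCoset (g : G) (K : Set G) (H : Set G)) :
    ∃ e : (((G ⧸ K) →₀ ℤ) ⊗[ℤ] ((G ⧸ H) →₀ ℤ)) ≃ₗ[ℤ]
        ⨁ g : I, ((G ⧸ (K ⊓ conjSub (g : G) H)) →₀ ℤ),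
      ∀ (a : G) (t : ((G ⧸ K) →₀ ℤ) ⊗[ℤ] ((G ⧸ H) →₀ ℤ)),
        e (TensorProduct.map (permAct K a) (permAct H a) t) =
          DFinsupp.mapRange.linearMap
            (fun g : I => permAct (K ⊓ conjSub (g : G) H) a) (e t) := by
  classical
  set φ : (G ⧸ K) × (G ⧸ H) ≃ (Σ g : I, G ⧸ (K ⊓ conjSub (g : G) H)) :=
    (Equiv.ofBijective _ (Psi_bij K H I hI)).symm with hφ
  have hφΨ : ∀ s, φ (Psi K H I s) = s := fun s =>
    (Equiv.ofBijective _ (Psi_bij K H I hI)).symm_apply_apply s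
  have hφ_smul : ∀ (a : G) (p : (G ⧸ K) × (G ⧸ H)),
      φ (a • p.1, a • p.2) = ⟨(φ p).1, a • (φ p).2⟩ := by
    intro a p
    have h1 : Psi K H I ⟨(φ p).1, a • (φ p).2⟩ = (a • p.1, a • p.2) := by
      have h2 : Psi K H I (φ p) = p :=
        (Equiv.ofBijective _ (Psi_bij K H I hI)).apply_symm_apply p
      show psi K H _ (a • (φ p).2) = _
      rw [psi_smul]
      have : psi K H ((φ p).1 : G) (φ p).2 = p := h2
      rw [this]
    rw [← h1, hφΨ]
  refine ⟨(finsuppTensorFinsupp' ℤ (G ⧸ K) (G ⧸ H)).trans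
    ((Finsupp.domLCongr φ).trans (sigmaFinsuppLequivDFinsupp ℤ)), ?_⟩
  intro a t
  have key : (LinearEquiv.trans (finsuppTensorFinsupp' ℤ (G ⧸ K) (G ⧸ H))
        ((Finsupp.domLCongr φ).trans (sigmaFinsuppLequivDFinsupp ℤ))).toLinearMap ∘ₗ
        TensorProduct.map (permAct K a) (permAct H a) =
      (DFinsupp.mapRange.linearMap
          (fun g : I => permAct (K ⊓ conjSub (g : G) H) a)) ∘ₗ
        (LinearEquiv.trans (finsuppTensorFinsupp' ℤ (G ⧸ K) (G ⧸ H))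
        ((Finsupp.domLCongr φ).trans (sigmaFinsuppLequivDFinsupp ℤ))).toLinearMap := by
    apply TensorProduct.ext
    apply Finsupp.lhom_ext'
    intro p
    apply LinearMap.ext_ring
    apply Finsupp.lhom_ext'
    intro q
    apply LinearMap.ext_ring
    simp only [LinearMap.comp_apply, LinearMap.compr₂_apply, LinearMap.compr₂ₛₗ_apply, TensorProduct.mk_apply,
      Finsupp.lsingle_apply, LinearEquiv.coe_coe]
    have hperm : ∀ (L : Subgroup G) (x : G ⧸ L) (c : ℤ),
        permAct L a (Finsupp.single x c) = Finsupp.single (a • x) c := by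
      intro L x c
      simp [permAct, Finsupp.mapDomain_single]
    rw [TensorProduct.map_tmul, hperm, hperm]
    simp only [LinearEquiv.trans_apply, finsuppTensorFinsupp'_single_tmul_single,
      Finsupp.domLCongr_apply, Finsupp.domCongr_apply, Finsupp.equivMapDomain_single,
      sigmaFinsuppLequivDFinsupp_apply]
    rw [show ((a • p, a • q) : (G ⧸ K) × (G ⧸ H)) = (a • (p, q).1, a • (p, q).2) from rfl,
      hφ_smul a (p, q)]
    change sigmaFinsuppEquivDFinsupp _ = DFinsupp.mapRange.linearMap
      (fun g : I => permAct (K ⊓ conjSub (g : G) H) a) (sigmaFinsuppEquivDFinsupp _)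
    rw [sigmaFinsuppEquivDFinsupp_single, sigmaFinsuppEquivDFinsupp_single]
    simp only [DFinsupp.mapRange.linearMap_apply, DFinsupp.mapRange_single]
    rw [hperm]
  exact LinearMap.congr_fun key t
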